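/- Let K be a nonempty finite index set, and for each k ∈ K let c_k ∈ {−1,1} and x_k* ∈ {−1,1} be such that c_k x_k* = 1 for at least (3/4)|K| indices k. Let ε ∈ (0,1] and let (x̃_k)_{k∈K} be mutually independent {−1,1}-valued random variables with Pr(x̃_k = x_k*) = (1+ε)/2. Then Pr( Σ_{k∈K} c_k x̃_k ≤ 0 ) ≤ exp(−ε²|K|/8). -/

import Mathlib

open Finset

/-- The `±1` value encoded by a Boolean: `true ↦ 1`, `false ↦ -1`. -/
noncomputable def sg (b : Bool) : ℝ := if b then 1 else -1

/-- The probability, in the Label Advice model with parameter `ε` and ground truth `xs`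
(taking values in `{-1, 1}`), of receiving the advice string `fun i => sg (s i)`. -/
noncomputable def advProb {ι : Type*} [Fintype ι] (ε : ℝ) (xs : ι → ℝ) (s : ι → Bool) : ℝ :=
  ∏ i, if sg (s i) = xs i then (1 + ε) / 2 else (1 - ε) / 2

set_option maxHeartbeats 1000000 in
/-- Let `K` be a nonempty finite index set with signs `c k ∈ {-1, 1}` and
ground-truth values `x* k ∈ {-1, 1}` such that `c k * x* k = 1` for at least `(3/4)|K|` indices.
For label advice `x̃` with parameter `ε ∈ (0, 1]`,
`Pr(∑_k c k * x̃ k ≤ 0) ≤ exp(-ε² |K| / 8)`. -/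
theorem hoeffding_bound_for_heavy_sign
    (K : Type*) [Fintype K] [DecidableEq K] [Nonempty K]
    (c xstar : K → ℝ)
    (hc : ∀ k, c k = 1 ∨ c k = -1) (hxs : ∀ k, xstar k = 1 ∨ xstar k = -1)
    (hmaj : (3 / 4 : ℝ) * Fintype.card K
      ≤ ((Finset.univ.filter fun k => c k * xstar k = 1).card : ℝ))
    (ε : ℝ) (hε : ε ∈ Set.Ioc (0 : ℝ) 1) :
    (∑ s : K → Bool, advProb ε xstar s *
        (if (∑ k, c k * sg (s k)) ≤ 0 then (1 : ℝ) else 0))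
      ≤ Real.exp (-(ε ^ 2 * Fintype.card K) / 8) := by
  obtain ⟨hε0, hε1⟩ := hε
  have h2m : (0:ℝ) < 2 - ε := by linarith
  have h2p : (0:ℝ) < 2 + ε := by linarith
  have he2 : ε^2 ≤ 1 := by nlinarith
  have he2pos : 0 < ε^2 := by positivity
  obtain ⟨D, hD⟩ : ∃ x : ℝ, x = Real.sqrt ((2+ε)/(2-ε)) := ⟨_, rfl⟩
  have hDpos : 0 < D := hD ▸ Real.sqrt_pos.mpr (by positivity)
  have hD2 : D^2 = (2+ε)/(2-ε) := hD ▸ Real.sq_sqrt (by positivity)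
  have hD1 : 1 ≤ D := by
    rw [hD, show (1:ℝ) = Real.sqrt 1 from (Real.sqrt_one).symm]
    exact Real.sqrt_le_sqrt (by rw [le_div_iff₀ h2m]; linarith)
  have hDinv : D⁻¹ = (2-ε)/(2+ε) * D := by
    refine inv_eq_of_mul_eq_one_right ?_
    rw [show D * ((2-ε)/(2+ε)*D) = (2-ε)/(2+ε)*D^2 by ring, hD2]
    field_simp
  obtain ⟨t, ht⟩ : ∃ x : ℝ, x = Real.log D := ⟨_, rfl⟩
  have htnn : 0 ≤ t := ht ▸ Real.log_nonneg hD1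
  have hexpt : Real.exp t = D := ht ▸ Real.exp_log hDpos
  have hexpnt : Real.exp (-t) = D⁻¹ := by rw [Real.exp_neg, hexpt]
  obtain ⟨A, hA⟩ : ∃ x : ℝ, x = (1+ε)/2 * D⁻¹ + (1-ε)/2 * D := ⟨_, rfl⟩
  obtain ⟨B, hB⟩ : ∃ x : ℝ, x = (1+ε)/2 * D + (1-ε)/2 * D⁻¹ := ⟨_, rfl⟩
  have hA' : A = (2-ε^2)/(2+ε) * D := by
    rw [hA, hDinv]; field_simp; ring
  have hB' : B = (2+ε^2)/(2+ε) * D := by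
    rw [hB, hDinv]; field_simp; ring
  have h2me2 : (0:ℝ) < 2 - ε^2 := by linarith
  have hApos : 0 < A := by rw [hA']; positivity
  have hBpos : 0 < B := by rw [hB']; positivity
  have hA2 : A^2 = (2-ε^2)^2/((2+ε)*(2-ε)) := by
    rw [hA', mul_pow, hD2]; field_simp
  have hB2 : B^2 = (2+ε^2)^2/((2+ε)*(2-ε)) := by
    rw [hB', mul_pow, hD2]; field_simp
  have hA2le : A^2 ≤ 1 := by
    rw [hA2, div_le_one (by positivity)]
    have hc0 : (0:ℝ) ≤ (1 - ε^2) * ε^2 :=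
      mul_nonneg (by linarith) he2pos.le
    nlinarith [hc0, he2pos]
  have hAle1 : A ≤ 1 := by nlinarith [hApos, hA2le]
  have hB2ge : 1 ≤ B^2 := by
    rw [hB2, le_div_iff₀ (by positivity)]
    nlinarith [he2pos, sq_nonneg (ε^2)]
  have hBge1 : 1 ≤ B := by nlinarith [hBpos, hB2ge]
  -- key scalar inequality
  have hABval : A^3 * B = (2-ε^2)^3*(2+ε^2)/((2+ε)^2*(2-ε)^2) := by
    calc A^3 * B = (2-ε^2)^3*(2+ε^2)/(2+ε)^4 * (D^2)^2 := by rw [hA', hB']; field_simp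
      _ = (2-ε^2)^3*(2+ε^2)/(2+ε)^4 * ((2+ε)/(2-ε))^2 := by rw [hD2]
      _ = (2-ε^2)^3*(2+ε^2)/((2+ε)^2*(2-ε)^2) := by field_simp
  have hkey : A^3 * B ≤ Real.exp (-(ε^2)/2) := by
    have hcert : (0:ℝ) ≤ (2-ε^2) * (ε^2)^2 * (5-2*ε^2) :=
      mul_nonneg (mul_nonneg h2me2.le (sq_nonneg _)) (by linarith)
    have h2 : (2-ε^2)^3*(2+ε^2)/((2+ε)^2*(2-ε)^2) ≤ 1 - ε^2/2 := by
      rw [div_le_iff₀ (by positivity)]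
      nlinarith [hcert]  -- certificate: RHS - LHS = hcert / 2
    have h3 : 1 - ε^2/2 ≤ Real.exp (-(ε^2)/2) := by
      have := Real.add_one_le_exp (-(ε^2)/2); linarith
    rw [hABval]; linarith
  -- the weighted factor function
  set g : K → Bool → ℝ := fun k b =>
    (if sg b = xstar k then (1+ε)/2 else (1-ε)/2) * Real.exp (-(t * (c k * sg b))) with hg
  have step1 : (∑ s : K → Bool, advProb ε xstar s *
        (if (∑ k, c k * sg (s k)) ≤ 0 then (1 : ℝ) else 0))
      ≤ ∑ s : K → Bool, ∏ k, g k (s k) := by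
    apply Finset.sum_le_sum
    intro s _
    have hp : 0 ≤ advProb ε xstar s := by
      unfold advProb
      apply Finset.prod_nonneg
      intro i _
      split <;> linarith
    have hprod : (∏ k, g k (s k))
        = advProb ε xstar s * Real.exp (-(t * ∑ k, c k * sg (s k))) := by
      rw [hg]
      simp only []
      rw [Finset.prod_mul_distrib]
      congr 1
      rw [← Real.exp_sum]
      congr 1
      rw [Finset.mul_sum, ← Finset.sum_neg_distrib]
    rw [hprod]
    apply mul_le_mul_of_nonneg_left _ hp
    split_ifs with h
    · rw [show (1:ℝ) = Real.exp 0 from Real.exp_zero.symm]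
      apply Real.exp_le_exp.mpr
      have := mul_nonneg htnn (neg_nonneg.mpr h)
      nlinarith [this]
    · positivity
  have step2 : (∑ s : K → Bool, ∏ k, g k (s k)) = ∏ k, (g k true + g k false) := by
    have h := Finset.prod_univ_sum (fun _ : K => (Finset.univ : Finset Bool))
      (fun k b => g k b)
    rw [Fintype.piFinset_univ] at h
    rw [← h]
    apply Finset.prod_congr rfl
    intro k _
    rw [Fintype.sum_bool]
  have hfac : ∀ k, g k true + g k false = if c k * xstar k = 1 then A else B := by
    intro k
    rcases hc k with h1 | h1 <;> rcases hxs k with h2 | h2 <;>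
      · rw [hg]
        simp only [sg, h1, h2, if_true, if_false]
        norm_num [hexpt, hexpnt, hA, hB]
        try ring
  set m := (Finset.univ.filter fun k => c k * xstar k = 1).card with hm
  set m' := (Finset.univ.filter fun k => ¬ (c k * xstar k = 1)).card with hm'
  have step4 : (∏ k, if c k * xstar k = 1 then A else B) = A ^ m * B ^ m' := by
    rw [Finset.prod_ite, Finset.prod_const, Finset.prod_const]
  have hcard : m + m' = Fintype.card K := by
    rw [hm, hm', ← Finset.card_univ]
    exact Finset.card_filter_add_card_filter_not _
  -- final bound
  obtain ⟨a, ha'⟩ : ∃ x : ℝ, x = Real.log A := ⟨_, rfl⟩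
  obtain ⟨b, hb'⟩ : ∃ x : ℝ, x = Real.log B := ⟨_, rfl⟩
  have ha : a ≤ 0 := ha' ▸ Real.log_nonpos (le_of_lt hApos) hAle1
  have hb : 0 ≤ b := hb' ▸ Real.log_nonneg hBge1
  have hab : 3*a + b ≤ -(ε^2)/2 := by
    have h0 : 0 < A^3*B := by positivity
    have h := (Real.log_le_iff_le_exp h0).mpr hkey
    rw [Real.log_mul (by positivity) (ne_of_gt hBpos), Real.log_pow, ← ha', ← hb'] at h
    push_cast at h
    linarith
  have step6 : A ^ m * B ^ m' ≤ Real.exp (-(ε ^ 2 * Fintype.card K) / 8) := by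
    have hexpA : A ^ m = Real.exp ((m:ℝ) * a) := by
      rw [ha', Real.exp_nat_mul, Real.exp_log hApos]
    have hexpB : B ^ m' = Real.exp ((m':ℝ) * b) := by
      rw [hb', Real.exp_nat_mul, Real.exp_log hBpos]
    rw [hexpA, hexpB, ← Real.exp_add]
    apply Real.exp_le_exp.mpr
    have hn : ((m:ℝ) + (m':ℝ)) = (Fintype.card K : ℝ) := by exact_mod_cast hcard
    have hn0 : (0:ℝ) ≤ (Fintype.card K : ℝ) := by positivity
    have h1 : (0:ℝ) ≤ ((m:ℝ) - 3/4*(Fintype.card K : ℝ)) * (-a) :=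
      mul_nonneg (by linarith [hmaj]) (by linarith)
    have h2 : (0:ℝ) ≤ ((Fintype.card K : ℝ)/4 - (m':ℝ)) * b :=
      mul_nonneg (by linarith [hmaj]) hb
    have h3 : (0:ℝ) ≤ (Fintype.card K : ℝ)/4 * (-(ε^2)/2 - (3*a + b)) :=
      mul_nonneg (by linarith) (by linarith)
    linarith [h1, h2, h3]
  calc (∑ s : K → Bool, advProb ε xstar s *
        (if (∑ k, c k * sg (s k)) ≤ 0 then (1 : ℝ) else 0))
      ≤ ∑ s : K → Bool, ∏ k, g k (s k) := step1
    _ = ∏ k, (g k true + g k false) := step2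
    _ = ∏ k, (if c k * xstar k = 1 then A else B) := Finset.prod_congr rfl (fun k _ => hfac k)
    _ = A ^ m * B ^ m' := step4
    _ ≤ Real.exp (-(ε ^ 2 * Fintype.card K) / 8) := step6
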